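/- Let C be the Cantor space ℕ → Bool with its standard metric, and let X ⊆ C. Suppose the selection principle S₁(Ω[C], GΛ[X|C]) holds, i.e., for every sequence (A_n : n ∈ ℕ) of ω-covers of C there exist open sets U_n ∈ A_n (n ∈ ℕ) such that the family {U_n : n ∈ ℕ} is a λ-groupable cover of X|C. Then X has sharp measure zero. -/

import Mathlib

-- The Cantor space `ℕ → Bool` carries the metric `dist x y = (1/2)^n`, where `n` is the
-- least index at which `x` and `y` differ; it induces the product topology.
attribute [local instance] PiNat.metricSpace

/-- An ω-cover of a topological space `Y` is a family `A` of open subsets of `Y`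
such that `Y` itself is not an element of `A` and every finite subset of `Y` is
contained in a single element of `A`. -/
def IsOmegaCover {Y : Type*} [TopologicalSpace Y] (A : Set (Set Y)) : Prop :=
  (∀ U ∈ A, IsOpen U) ∧ Set.univ ∉ A ∧
    ∀ F : Set Y, F.Finite → ∃ U ∈ A, F ⊆ U

/-- `A` is a λ-groupable cover of `X|Y`: an infinite family of open subsets of `Y`
covering `X`, admitting a partition into finite pieces such that every `x ∈ X`
belongs to the union of all but finitely many of the pieces. -/
def IsLambdaGroupableCover {Y : Type*} [TopologicalSpace Y] (X : Set Y)
    (A : Set (Set Y)) : Prop :=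
  (∀ U ∈ A, IsOpen U) ∧ A.Infinite ∧ X ⊆ ⋃₀ A ∧
    ∃ π : Set Y → ℕ, (∀ n, {U ∈ A | π U = n}.Finite) ∧
      ∀ x ∈ X, ∀ᶠ n in Filter.atTop, x ∈ ⋃₀ {U ∈ A | π U = n}

/-- A subset `X` of a metric space `Y` has sharp measure zero if for every sequence
`(ε n)` of positive reals there are a sequence `(U n)` of subsets of `Y` with
`diam (U n) ≤ ε n` for every `n` whose union covers `X`, together with a map
`π : ℕ → ℕ` with finite fibers such that every `x ∈ X` belongs to
`⋃ {U k : π k = m}` for all but finitely many `m`. -/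
def HasSharpMeasureZero {Y : Type*} [MetricSpace Y] (X : Set Y) : Prop :=
  ∀ ε : ℕ → ℝ, (∀ n, 0 < ε n) →
    ∃ (U : ℕ → Set Y) (π : ℕ → ℕ),
      (∀ n, EMetric.diam (U n) ≤ ENNReal.ofReal (ε n)) ∧ X ⊆ ⋃ n, U n ∧
      (∀ m, (π ⁻¹' {m}).Finite) ∧
      ∀ x ∈ X, ∀ᶠ m in Filter.atTop, x ∈ ⋃ k ∈ π ⁻¹' {m}, U k

/-- If the selection principle `S₁(Ω[C], GΛ[X|C])` holds for a subset `X` of the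
Cantor space, then `X` has sharp measure zero. -/
theorem hasSharpMeasureZero_of_selection (X : Set (ℕ → Bool))
    (hsel : ∀ A : ℕ → Set (Set (ℕ → Bool)), (∀ n, IsOmegaCover (A n)) →
      ∃ U : ℕ → Set (ℕ → Bool), (∀ n, U n ∈ A n) ∧
        IsLambdaGroupableCover X (Set.range U)) :
    HasSharpMeasureZero X := by
  classical
  intro ε hε
  -- the family of ω-covers
  set A : ℕ → Set (Set (ℕ → Bool)) := fun n =>
    { W | W ≠ Set.univ ∧ ∃ (s : Finset ℕ) (c : ℕ → (ℕ → Bool)) (L : ℕ),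
        (∀ j ∈ s, ((1:ℝ)/2) ^ L ≤ ε (Nat.pair n j)) ∧
        W = ⋃ j ∈ s, PiNat.cylinder (c j) L } with hA
  have hAomega : ∀ n, IsOmegaCover (A n) := by
    intro n
    refine ⟨?_, ?_, ?_⟩
    · rintro W ⟨-, s, c, L, -, rfl⟩
      exact isOpen_biUnion fun j _ => PiNat.isOpen_cylinder _ _ _
    · rintro ⟨h, -⟩; exact h rfl
    · intro F hF
      set t : Finset (ℕ → Bool) := hF.toFinset with ht
      set k : ℕ := t.card with hk
      have hL' : ∀ j : ℕ, ∃ L : ℕ, ((1:ℝ)/2) ^ L ≤ ε (Nat.pair n j) := by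
        intro j
        obtain ⟨L, hL⟩ := exists_pow_lt_of_lt_one (hε (Nat.pair n j))
          (by norm_num : (1:ℝ)/2 < 1)
        exact ⟨L, hL.le⟩
      choose L' hL' using hL'
      set L : ℕ := max k ((Finset.range k).sup L') with hLdef
      set c : ℕ → (ℕ → Bool) := fun j =>
        if h : j < k then ((t.equivFin.symm ⟨j, h⟩ : t) : ℕ → Bool) else fun _ => false
        with hc
      refine ⟨⋃ j ∈ Finset.range k, PiNat.cylinder (c j) L, ⟨?_, Finset.range k, c, L, ?_, rfl⟩, ?_⟩
      · -- not univ
        have hcard : Fintype.card (Fin k) < Fintype.card (Fin L → Bool) := by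
          rw [Fintype.card_fin, Fintype.card_fun, Fintype.card_fin, Fintype.card_bool]
          exact lt_of_lt_of_le k.lt_two_pow_self
            (Nat.pow_le_pow_right (by norm_num) (le_max_left _ _))
        have hnsurj : ¬ Function.Surjective (fun j : Fin k => fun i : Fin L => c j i) :=
          fun hs => absurd (Fintype.card_le_of_surjective _ hs) (not_le.mpr hcard)
        rw [Function.Surjective] at hnsurj
        push_neg at hnsurj
        obtain ⟨g, hg⟩ := hnsurj
        set y : ℕ → Bool := fun i => if h : i < L then g ⟨i, h⟩ else false with hy
        intro huniv
        have hyU : y ∈ ⋃ j ∈ Finset.range k, PiNat.cylinder (c j) L := by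
          rw [huniv]; trivial
        simp only [Set.mem_iUnion, Finset.mem_range] at hyU
        obtain ⟨j, hj, hyc⟩ := hyU
        apply hg ⟨j, hj⟩
        funext i
        have := PiNat.mem_cylinder_iff.1 hyc i.1 i.2
        simpa [hy, i.2] using this.symm
      · intro j hj
        refine le_trans ?_ (hL' j)
        apply pow_le_pow_of_le_one (by norm_num) (by norm_num)
        exact le_trans (Finset.le_sup (Finset.mem_range.2 (Finset.mem_range.1 hj)))
          (le_max_right _ _)
      · -- F ⊆ union
        intro x hx
        have hxt : x ∈ t := hF.mem_toFinset.2 hx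
        set i := t.equivFin ⟨x, hxt⟩ with hi
        have hci : c i.1 = x := by
          rw [hc]
          simp only [i.2, dif_pos]
          have : (⟨i.1, i.2⟩ : Fin k) = i := rfl
          rw [dif_pos (show (i:ℕ) < k from i.2)]
          exact congrArg Subtype.val (t.equivFin.symm_apply_apply ⟨x, hxt⟩)
        simp only [Set.mem_iUnion, Finset.mem_range]
        exact ⟨i.1, i.2, hci ▸ PiNat.self_mem_cylinder x L⟩
  obtain ⟨U, hUA, hgl⟩ := hsel A hAomega
  obtain ⟨-, -, hcov, π, hπfin, hπev⟩ := hgl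
  have hdata : ∀ n, ∃ (s : Finset ℕ) (c : ℕ → (ℕ → Bool)) (L : ℕ),
      (∀ j ∈ s, ((1:ℝ)/2) ^ L ≤ ε (Nat.pair n j)) ∧
      U n = ⋃ j ∈ s, PiNat.cylinder (c j) L := fun n => (hUA n).2
  choose s c L hεb hUeq using hdata
  -- minimal representatives
  set R : ℕ → Prop := fun n => ∀ m < n, U m ≠ U n with hR
  set P : ℕ → Prop := fun kk =>
    R (Nat.unpair kk).1 ∧ (Nat.unpair kk).2 ∈ s (Nat.unpair kk).1 with hP
  set V : ℕ → Set (ℕ → Bool) := fun kk =>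
    if P kk then PiNat.cylinder (c (Nat.unpair kk).1 (Nat.unpair kk).2)
      (L (Nat.unpair kk).1) else ∅ with hV
  set π' : ℕ → ℕ := fun kk => if P kk then π (U (Nat.unpair kk).1) else kk with hπ'
  -- minimal representative exists and covers
  have hmin : ∀ n, ∃ n', R n' ∧ U n' = U n := by
    intro n
    have hex : ∃ m, U m = U n := ⟨n, rfl⟩
    refine ⟨Nat.find hex, ?_, Nat.find_spec hex⟩
    intro m hm heq
    exact Nat.find_min hex hm (heq.trans (Nat.find_spec hex))
  have hVpos : ∀ kk, P kk → V kk = PiNat.cylinder (c (Nat.unpair kk).1 (Nat.unpair kk).2)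
      (L (Nat.unpair kk).1) := fun kk h => if_pos h
  have hVneg : ∀ kk, ¬ P kk → V kk = ∅ := fun kk h => if_neg h
  have hπ'pos : ∀ kk, P kk → π' kk = π (U (Nat.unpair kk).1) := fun kk h => if_pos h
  have hπ'neg : ∀ kk, ¬ P kk → π' kk = kk := fun kk h => if_neg h
  refine ⟨V, π', ?_, ?_, ?_, ?_⟩
  · -- diameters
    intro kk
    by_cases h : P kk
    · rw [hVpos kk h]
      set n := (Nat.unpair kk).1
      set j := (Nat.unpair kk).2
      have hbd : ((1:ℝ)/2) ^ L n ≤ ε kk := by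
        have := hεb n j h.2
        rwa [Nat.pair_unpair kk] at this
      refine le_trans (EMetric.diam_le ?_) (ENNReal.ofReal_le_ofReal hbd)
      intro a ha b hb
      rw [edist_dist]
      apply ENNReal.ofReal_le_ofReal
      have : a ∈ PiNat.cylinder b (L n) := by
        rw [PiNat.mem_cylinder_iff]
        intro i hi
        rw [PiNat.mem_cylinder_iff.1 ha i hi, PiNat.mem_cylinder_iff.1 hb i hi]
      exact PiNat.mem_cylinder_iff_dist_le.1 this
    · rw [hVneg kk h]
      exact (EMetric.diam_empty).le.trans (zero_le)
  · -- covering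
    intro x hx
    obtain ⟨W, ⟨n, rfl⟩, hxW⟩ := hcov hx
    obtain ⟨n', hRn', heq⟩ := hmin n
    have hxn' : x ∈ U n' := heq ▸ hxW
    rw [hUeq n'] at hxn'
    simp only [Set.mem_iUnion] at hxn'
    obtain ⟨j, hj, hxc⟩ := hxn'
    refine Set.mem_iUnion.2 ⟨Nat.pair n' j, ?_⟩
    have hPk : P (Nat.pair n' j) := by
      rw [hP]; simp only [Nat.unpair_pair]; exact ⟨hRn', hj⟩
    rw [hVpos _ hPk]
    simpa only [Nat.unpair_pair] using hxc
  · -- finite fibers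
    intro m
    set T : Set ℕ := {n | R n ∧ π (U n) = m} with hT
    have hTfin : T.Finite := by
      have himg : (U '' T).Finite := by
        apply (hπfin m).subset
        rintro _ ⟨n, ⟨_, hπm⟩, rfl⟩
        exact ⟨⟨n, rfl⟩, hπm⟩
      refine Set.Finite.of_finite_image himg ?_
      intro a ha b hb hab
      by_contra hne
      rcases Nat.lt_or_ge a b with h | h
      · exact hb.1 a h hab
      · exact ha.1 b (lt_of_le_of_ne h (Ne.symm hne)) hab.symm
    have hsub : π' ⁻¹' {m} ⊆ {m} ∪ ⋃ n ∈ T, (fun j => Nat.pair n j) '' (s n : Set ℕ) := by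
      intro kk hkk
      simp only [Set.mem_preimage, Set.mem_singleton_iff] at hkk
      by_cases h : P kk
      · rw [hπ'pos kk h] at hkk
        right
        refine Set.mem_biUnion (show (Nat.unpair kk).1 ∈ T from ⟨h.1, hkk⟩) ?_
        exact ⟨(Nat.unpair kk).2, h.2, Nat.pair_unpair kk⟩
      · rw [hπ'neg kk h] at hkk
        left; exact hkk
    exact Set.Finite.subset ((Set.finite_singleton m).union
      (hTfin.biUnion fun n _ => ((s n).finite_toSet.image _))) hsub
  · -- groupability
    intro x hx
    filter_upwards [hπev x hx] with m hm
    obtain ⟨W, ⟨⟨n, rfl⟩, hπm⟩, hxW⟩ := hm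
    obtain ⟨n', hRn', heq⟩ := hmin n
    have hxn' : x ∈ U n' := heq ▸ hxW
    have hπn' : π (U n') = m := by rw [heq]; exact hπm
    rw [hUeq n'] at hxn'
    simp only [Set.mem_iUnion] at hxn'
    obtain ⟨j, hj, hxc⟩ := hxn'
    have hPk : P (Nat.pair n' j) := by
      rw [hP]; simp only [Nat.unpair_pair]; exact ⟨hRn', hj⟩
    refine Set.mem_biUnion (show Nat.pair n' j ∈ π' ⁻¹' {m} from ?_) ?_
    · simp only [Set.mem_preimage, Set.mem_singleton_iff]
      rw [hπ'pos _ hPk]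
      simpa only [Nat.unpair_pair] using hπn'
    · rw [hVpos _ hPk]
      simpa only [Nat.unpair_pair] using hxc
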